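/- Let G be a properly edge-colored graph with no rainbow path of length k+1 and P* = v_0…v_k a rainbow path with colors c_i = c(v_{i-1}v_i). Suppose w ∉ {v_0,…,v_k}, v_0 w ∈ E(G), and for some 0 ≤ j ≤ k-2 the edge v_k v_j exists with c(v_k v_j) ∉ {c_1,…,c_k}. Then c(v_0 w) ≠ c(v_j v_{j+1}). -/

import Mathlib

open SimpleGraph

/-- A proper edge-coloring: edges sharing a vertex receive distinct colors. -/
def ProperEdgeColoring {V : Type*} (G : SimpleGraph V) (c : Sym2 V → ℕ) : Prop :=
  ∀ ⦃u v w : V⦄, G.Adj u v → G.Adj u w → v ≠ w → c s(u, v) ≠ c s(u, w)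

/-- Split a walk at an internal position `j < p.length`. -/
lemma walk_split {V : Type*} {G : SimpleGraph V} :
    ∀ {u v : V} (p : G.Walk u v) (j : ℕ), j < p.length →
      ∃ (t : G.Walk u (p.getVert j)) (d : G.Walk (p.getVert (j + 1)) v),
        t.length = j ∧ d.length + (j + 1) = p.length ∧
        p.edges = t.edges ++ s(p.getVert j, p.getVert (j + 1)) :: d.edges ∧
        p.support = t.support ++ d.support := by
  intro u v p
  induction p with
  | nil => intro j hj; simp at hj
  | @cons a b v' h q ih =>
    intro j hj
    cases j with
    | zero =>
      refine ⟨SimpleGraph.Walk.nil, q.copy (q.getVert_zero).symm rfl, ?_, ?_, ?_, ?_⟩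
      · rfl
      · simp [SimpleGraph.Walk.getVert_cons_succ]
      · simp [SimpleGraph.Walk.getVert_cons_succ]; rfl
      · simp [SimpleGraph.Walk.getVert_cons_succ]; rfl
    | succ n =>
      obtain ⟨t, d, h1, h2, h3, h4⟩ := ih n (by simpa using hj)
      exact ⟨SimpleGraph.Walk.cons h t, d, by simp [h1],
        by simp only [SimpleGraph.Walk.length_cons]; show d.length + (n + 1 + 1) = q.length + 1; omega, by simp [SimpleGraph.Walk.getVert_cons_succ, h3],
        by simp [SimpleGraph.Walk.getVert_cons_succ, h4]⟩

lemma list_rainbow {α : Type*} (A B : List α) (x y : α)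
    (h1 : (A ++ x :: B).Nodup) (h2 : y ∉ A ++ x :: B) :
    (x :: (A ++ y :: B.reverse)).Nodup := by
  rw [List.nodup_append, List.nodup_cons] at h1
  obtain ⟨hA, ⟨hxB, hB⟩, hdisj⟩ := h1
  simp only [List.mem_append, List.mem_cons, not_or] at h2
  obtain ⟨hyA, hyx, hyB⟩ := h2
  rw [List.nodup_cons, List.nodup_append, List.nodup_cons]
  refine ⟨?_, hA, ⟨?_, List.nodup_reverse.mpr hB⟩, ?_⟩
  · simp only [List.mem_append, List.mem_cons, List.mem_reverse, not_or]
    exact ⟨fun hxA => hdisj x hxA x List.mem_cons_self rfl, fun h => hyx h.symm, hxB⟩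
  · rw [List.mem_reverse]; exact hyB
  · intro a ha b hb
    rcases List.mem_cons.mp hb with rfl | hb'
    · exact fun h => hyA (h ▸ ha)
    · exact hdisj a ha b (List.mem_cons_of_mem _ (List.mem_reverse.mp hb'))

/-- Claim 1: `L_out ∩ S_R = ∅`. Let `G` be properly
edge-colored with no rainbow path of length `k+1` and `p = v_0 … v_k` a rainbow
path. If `w ∉ {v_0,…,v_k}`, `v_0 w ∈ E(G)`, and for some `0 ≤ j ≤ k-2` the edge
`v_k v_j` exists and has a color outside `{c_1,…,c_k}`, then
`c(v_0 w) ≠ c(v_j v_{j+1})`. -/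
theorem Lout_inter_SR_empty {V : Type*} [DecidableEq V]
    (G : SimpleGraph V) (c : Sym2 V → ℕ) (k : ℕ)
    (hproper : ProperEdgeColoring G c)
    (hno : ∀ (x y : V) (q : G.Walk x y), q.IsPath → q.length = k + 1 →
      ¬ (q.edges.map c).Nodup)
    (v₀ vₖ : V) (p : G.Walk v₀ vₖ) (hp : p.IsPath) (hlen : p.length = k)
    (hrb : (p.edges.map c).Nodup)
    (w : V) (hw : w ∉ p.support) (hadj : G.Adj v₀ w)
    (j : ℕ) (hj : j ≤ k - 2) (hadj' : G.Adj vₖ (p.getVert j))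
    (hnew : c s(vₖ, p.getVert j) ∉ p.edges.map c) :
    c s(v₀, w) ≠ c s(p.getVert j, p.getVert (j + 1)) := by
  intro heq
  -- rule out tiny k
  rcases Nat.lt_or_ge (j + 1) k with hjk | hge
  swap
  · -- then k ≤ 1
    have hk1 : k ≤ 1 := by omega
    rcases Nat.lt_or_ge j k with hj' | hj'
    · -- j < k ≤ 1, so j = 0, k = 1
      have hjlt : j < p.length := by omega
      obtain ⟨t, d, h1, h2, h3, h4⟩ := walk_split p j hjlt
      have hj0 : j = 0 := by omega
      have hk : k = 1 := by omega
      have hd0 : d.length = 0 := by omega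
      have ht0 : t.length = 0 := by omega
      have hv1 : p.getVert (j + 1) = vₖ := by
        rw [SimpleGraph.Walk.getVert_of_length_le]; omega
      apply hnew
      rw [h3]
      simp [hv1, Sym2.eq_swap]
    · -- k ≤ j, so getVert j = vₖ
      have : p.getVert j = vₖ := p.getVert_of_length_le (by omega)
      rw [this] at hadj'
      exact G.irrefl hadj'
  · -- main case : j + 1 < k
    have hjlt : j < p.length := by omega
    obtain ⟨t, d, h1, h2, h3, h4⟩ := walk_split p j hjlt
    let q : G.Walk w (p.getVert (j + 1)) :=
      SimpleGraph.Walk.cons hadj.symm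
        (t.append (SimpleGraph.Walk.cons hadj'.symm d.reverse))
    have hqlen : q.length = k + 1 := by
      simp only [q, SimpleGraph.Walk.length_cons, SimpleGraph.Walk.length_append,
        SimpleGraph.Walk.length_reverse, h1]
      omega
    have hqpath : q.IsPath := by
      rw [SimpleGraph.Walk.isPath_def]
      have hsupp : q.support = w :: (t.support ++ d.support.reverse) := by
        simp only [q, SimpleGraph.Walk.support_cons, SimpleGraph.Walk.support_append,
          SimpleGraph.Walk.support_reverse, List.tail_cons]
      rw [hsupp]
      have hpnd : p.support.Nodup := hp.support_nodup
      rw [h4] at hpnd hw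
      rw [List.nodup_append] at hpnd
      simp only [List.mem_append, not_or] at hw
      refine List.nodup_cons.mpr ⟨?_, ?_⟩
      · simp only [List.mem_append, List.mem_reverse, not_or]
        exact ⟨hw.1, hw.2⟩
      · rw [List.nodup_append]
        exact ⟨hpnd.1, List.nodup_reverse.mpr hpnd.2.1,
          fun a ha b hb => hpnd.2.2 a ha b (List.mem_reverse.mp hb)⟩
    apply hno w (p.getVert (j + 1)) q hqpath hqlen
    have hqe : q.edges = s(w, v₀) ::
        (t.edges ++ s(p.getVert j, vₖ) :: d.edges.reverse) := by
      simp only [q, SimpleGraph.Walk.edges_cons, SimpleGraph.Walk.edges_append,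
        SimpleGraph.Walk.edges_reverse]
    rw [hqe, List.map_cons, List.map_append, List.map_cons, List.map_reverse]
    have hx : c s(w, v₀) = c s(p.getVert j, p.getVert (j + 1)) := by
      rwa [Sym2.eq_swap] at heq
    rw [hx]
    rw [h3, List.map_append, List.map_cons] at hrb hnew
    rw [show s(vₖ, p.getVert j) = s(p.getVert j, vₖ) from Sym2.eq_swap] at hnew
    exact list_rainbow (t.edges.map c) (d.edges.map c) _ _ hrb hnew
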